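/- arXiv:2012.09975 — 3 statements merged into one kernel-verified Lean document; each statement's English description precedes it below -/
import Mathlib

section
/- The map γ : Γ → [0,1] defined by γ(r⁻) = r and γ(q°) = q is monotone and surjective, and the map ι° : [0,1] → Γ defined by ι°(r) = r° if r is rational and ι°(r) = r⁻ otherwise is its right adjoint: for all y ∈ Γ and x ∈ [0,1], γ(y) ≤ x iff y ≤ ι°(x). -/
open scoped Classical

/-- The carrier of the "doubled unit interval" `Γ`: pairs `(r, b)` ordered
lexicographically, where `b = true` represents an exact value `r°`
(which must be rational) and `b = false` represents an approximation `r⁻`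
(which must satisfy `r > 0`). -/
def GammaCarrier : Set (Lex (ℝ × Bool)) :=
  {p | 0 ≤ (ofLex p).1 ∧ (ofLex p).1 ≤ 1 ∧
    ((ofLex p).2 = true → ∃ q : ℚ, (q : ℝ) = (ofLex p).1) ∧
    ((ofLex p).2 = false → 0 < (ofLex p).1)}

/-- The doubled unit interval `Γ`, with the (total) order inherited from the
lexicographic product: `r* < s*` iff `r < s`, and `q⁻ < q°` immediately. -/
abbrev Gamma : Type := {p : Lex (ℝ × Bool) // p ∈ GammaCarrier}

theorem mem_gammaCarrier {a : ℝ} {b : Bool} (h1 : 0 ≤ a) (h2 : a ≤ 1)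
    (h3 : b = true → ∃ q : ℚ, (q : ℝ) = a) (h4 : b = false → 0 < a) :
    toLex (a, b) ∈ GammaCarrier := ⟨h1, h2, h3, h4⟩

/-- The underlying real number of an element of `Γ` (the map `γ`). -/
def γmap (x : Gamma) : ℝ := (ofLex x.1).1

/-- An element of `Γ` is exact iff it is of `°`-type. -/
def gexact (x : Gamma) : Prop := (ofLex x.1).2 = true

theorem gmem (x : Gamma) : 0 ≤ (ofLex x.1).1 ∧ (ofLex x.1).1 ≤ 1 ∧
    ((ofLex x.1).2 = true → ∃ q : ℚ, (q : ℝ) = (ofLex x.1).1) ∧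
    ((ofLex x.1).2 = false → 0 < (ofLex x.1).1) := x.2

/-- Smart constructor for `Γ`: clamps `r` into `[0,1]`, and produces the exact
value `r°` if `e = true` and `r` is rational (or `r = 0`), and `r⁻` otherwise. -/
noncomputable def mk' (r : ℝ) (e : Bool) : Gamma :=
  if h : (e = true ∧ ∃ q : ℚ, (q : ℝ) = max 0 (min 1 r)) ∨ max 0 (min 1 r) = 0 then
    ⟨toLex (max 0 (min 1 r), true),
      mem_gammaCarrier (le_max_left 0 _) (max_le zero_le_one (min_le_left 1 r))
        (fun _ => h.elim (fun h' => h'.2) (fun h0 => ⟨0, by rw [h0]; norm_num⟩))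
        (fun hc => absurd hc (by simp))⟩
  else
    ⟨toLex (max 0 (min 1 r), false),
      mem_gammaCarrier (le_max_left 0 _) (max_le zero_le_one (min_le_left 1 r))
        (fun hc => absurd hc (by simp))
        (fun _ => lt_of_le_of_ne (le_max_left 0 _) (fun h0 => h (Or.inr h0.symm)))⟩

/-- `0°`, the bottom element of `Γ`. -/
noncomputable def gzero : Gamma := mk' 0 true
/-- `1°`, the top element of `Γ`. -/
noncomputable def gone : Gamma := mk' 1 true
/-- The section `ι° : [0,1] → Γ`, `r ↦ r°` for rational `r` and `r ↦ r⁻` otherwise. -/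
noncomputable def icircR (r : ℝ) : Gamma := mk' r true
/-- The section `ι⁻ : [0,1] → Γ`, `0 ↦ 0°` and `r ↦ r⁻` for `r > 0`. -/
noncomputable def iminusR (r : ℝ) : Gamma := mk' r false
/-- The exact value `q°` of a rational `q ∈ [0,1]`. -/
noncomputable def gq (q : ℚ) : Gamma := mk' (q : ℝ) true
/-- `ι°` as a map on the unit interval. -/
noncomputable def icirc (r : Set.Icc (0:ℝ) 1) : Gamma := icircR r.1
/-- `ι⁻` as a map on the unit interval. -/
noncomputable def iminusI (r : Set.Icc (0:ℝ) 1) : Gamma := iminusR r.1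
/-- `γ : Γ → [0,1]` as a map into the unit interval. -/
noncomputable def gmapI (x : Gamma) : Set.Icc (0:ℝ) 1 := ⟨γmap x, (gmem x).1, (gmem x).2.1⟩

/-- The partial subtraction `∸` on `Γ` (meaningful when `y ≤ x`):
`r° ∸ s° = (r−s)°`, `r⁻ ∸ s° = (r−s)⁻`, and `r* ∸ s⁻ = (r−s)°` if `r−s ∈ ℚ`,
`(r−s)⁻` otherwise. -/
noncomputable def gsub (x y : Gamma) : Gamma :=
  mk' (γmap x - γmap y)
    (if (gexact x ∧ gexact y) ∨ (¬ gexact y ∧ ∃ q : ℚ, (q : ℝ) = γmap x - γmap y)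
      then true else false)

/-- The second partial subtraction `∸̃` on `Γ` (meaningful when `y ≤ x`):
`x ∸̃ x = 0°` and, for `y < x`, `r° ∸̃ s° = r⁻ ∸̃ s⁻ = r⁻ ∸̃ s° = (r−s)⁻` and
`r° ∸̃ s⁻ = (r−s)°` if `r−s ∈ ℚ`, `(r−s)⁻` otherwise. -/
noncomputable def gsubt (x y : Gamma) : Gamma :=
  mk' (γmap x - γmap y)
    (if gexact x ∧ ¬ gexact y ∧ ∃ q : ℚ, (q : ℝ) = γmap x - γmap y then true else false)

/-- The partial addition `+` on `Γ` (meaningful when `x ≤ 1° ∸ y`):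
`r° + s° = (r+s)°` and any sum involving a `⁻`-argument is of `⁻`-type. -/
noncomputable def gadd (x y : Gamma) : Gamma :=
  mk' (γmap x + γmap y) (if gexact x ∧ gexact y then true else false)

/-- A `Γ`-valued (finitely additive, probability) measure on a bounded lattice. -/
def IsGMeasure {D : Type*} [Lattice D] [BoundedOrder D] (μ : D → Gamma) : Prop :=
  Monotone μ ∧ μ ⊥ = gzero ∧ μ ⊤ = gone ∧
  ∀ a b : D, gsubt (μ a) (μ (a ⊓ b)) ≤ gsub (μ (a ⊔ b)) (μ b) ∧
    gsubt (μ (a ⊔ b)) (μ b) ≤ gsub (μ a) (μ (a ⊓ b))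


lemma gamma_le_iff (y z : Gamma) : y ≤ z ↔
    γmap y < γmap z ∨ (γmap y = γmap z ∧ (ofLex y.1).2 ≤ (ofLex z.1).2) := by
  rw [← Subtype.coe_le_coe]
  exact Prod.Lex.le_iff

lemma icirc_fst (x : Set.Icc (0:ℝ) 1) : γmap (icirc x) = x.1 := by
  have h1 := x.2.1; have h2 := x.2.2
  unfold icirc icircR mk' γmap
  split <;> simp [min_eq_right h2, max_eq_right h1]

lemma icirc_snd_false {x : Set.Icc (0:ℝ) 1} (h : (ofLex (icirc x).1).2 = false) :
    ¬ ∃ q : ℚ, (q : ℝ) = x.1 := by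
  have h1 := x.2.1; have h2 := x.2.2
  unfold icirc icircR mk' at h
  split at h
  · simp at h
  · rename_i hc
    rw [min_eq_right h2, max_eq_right h1] at hc
    intro hq
    exact hc (Or.inl ⟨rfl, hq⟩)

/-- `γ : Γ → [0,1]` is monotone and surjective, and
`ι° : [0,1] → Γ` is its right adjoint: `γ(y) ≤ x` iff `y ≤ ι°(x)`. -/
theorem stmt_3 :
    Monotone gmapI ∧ Function.Surjective gmapI ∧
    ∀ (y : Gamma) (x : Set.Icc (0:ℝ) 1), gmapI y ≤ x ↔ y ≤ icirc x := by
  have hmono : Monotone gmapI := by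
    intro y z h
    rw [gamma_le_iff] at h
    rw [Subtype.mk_le_mk]
    rcases h with h | ⟨h, _⟩
    · exact le_of_lt h
    · exact le_of_eq h
  refine ⟨hmono, ?_, ?_⟩
  · intro x
    exact ⟨icirc x, Subtype.ext (icirc_fst x)⟩
  · intro y x
    constructor
    · intro h
      rw [Subtype.mk_le_mk] at h
      rw [gamma_le_iff, icirc_fst]
      rcases lt_or_eq_of_le h with h | h
      · exact Or.inl h
      · refine Or.inr ⟨h, ?_⟩
        cases hb : (ofLex (icirc x).1).2 with
        | true => exact Bool.le_true _
        | false =>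
          have hnq := icirc_snd_false hb
          cases hy : (ofLex y.1).2 with
          | false => exact le_refl _
          | true =>
            exact absurd (by rw [← h]; exact (gmem y).2.2.1 hy) hnq
    · intro h
      have h1 := hmono h
      have h2 : (gmapI (icirc x)).1 = x.1 := icirc_fst x
      exact Subtype.coe_le_coe.mp (le_trans h1 (le_of_eq h2))
end

section
/- For every x ∈ Γ and every nonempty family {y_i} ⊆ [0°, x], x ∸ sup_i y_i = inf_i (x ∸ y_i); that is, the map x ∸ (−) sends suprema to infima on the interval [0°, x]. -/
open scoped Classical

lemma gamma_nonneg (a : Gamma) : 0 ≤ γmap a := (gmem a).1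
lemma gamma_le_one (a : Gamma) : γmap a ≤ 1 := (gmem a).2.1
lemma gexact_rat {a : Gamma} (h : gexact a) : ∃ q : ℚ, (q : ℝ) = γmap a := (gmem a).2.2.1 h

lemma gle_iff (a b : Gamma) :
    a ≤ b ↔ γmap a < γmap b ∨ (γmap a = γmap b ∧ (gexact a → gexact b)) := by
  rw [← Subtype.coe_le_coe]
  have : (a : Lex (ℝ × Bool)) ≤ b ↔ toLex (ofLex a.1) ≤ toLex (ofLex b.1) := Iff.rfl
  rw [this, Prod.Lex.le_iff]
  simp only [ofLex_toLex]
  unfold γmap gexact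
  constructor
  · rintro (h | ⟨h1, h2⟩)
    · exact Or.inl h
    · refine Or.inr ⟨h1, fun he => ?_⟩
      rw [he] at h2; exact top_le_iff.mp h2
  · rintro (h | ⟨h1, h2⟩)
    · exact Or.inl h
    · refine Or.inr ⟨h1, ?_⟩
      cases hb : (ofLex a.1).2
      · exact Bool.false_le _
      · rw [h2 hb]

lemma gamma_mono {a b : Gamma} (h : a ≤ b) : γmap a ≤ γmap b := by
  rcases (gle_iff a b).mp h with h | ⟨h, _⟩
  · exact h.le
  · exact h.le

lemma mk'_clamp {r : ℝ} (h0 : 0 ≤ r) (h1 : r ≤ 1) : max 0 (min 1 r) = r := by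
  rw [min_eq_right h1, max_eq_right h0]

lemma mk'_val {r : ℝ} (h0 : 0 ≤ r) (h1 : r ≤ 1) (e : Bool) : γmap (mk' r e) = r := by
  unfold mk'
  split_ifs <;> simp [γmap, mk'_clamp h0 h1]

lemma mk'_exact_iff {r : ℝ} (h0 : 0 ≤ r) (h1 : r ≤ 1) (e : Bool) :
    gexact (mk' r e) ↔ (e = true ∧ ∃ q : ℚ, (q : ℝ) = r) ∨ r = 0 := by
  unfold mk'
  simp only [mk'_clamp h0 h1]
  split_ifs with h
  · simpa [gexact] using h
  · simpa [gexact] using h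

lemma gsub_val {x y : Gamma} (h : y ≤ x) : γmap (gsub x y) = γmap x - γmap y :=
  mk'_val (by linarith [gamma_mono h]) (by linarith [gamma_le_one x, gamma_nonneg y]) _

lemma gsub_exact_iff {x y : Gamma} (h : y ≤ x) :
    gexact (gsub x y) ↔
      ((∃ q : ℚ, (q : ℝ) = γmap x - γmap y) ∧ (gexact x ∨ ¬ gexact y)) ∨
        γmap x - γmap y = 0 := by
  unfold gsub
  rw [mk'_exact_iff (by linarith [gamma_mono h]) (by linarith [gamma_le_one x, gamma_nonneg y])]
  split_ifs with hc
  · simp only [true_and]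
    constructor
    · rintro (hr | h0)
      · rcases hc with ⟨hx, hy⟩ | ⟨hy, _⟩
        · exact Or.inl ⟨hr, Or.inl hx⟩
        · exact Or.inl ⟨hr, Or.inr hy⟩
      · exact Or.inr h0
    · rintro (⟨hr, _⟩ | h0)
      · exact Or.inl hr
      · exact Or.inr h0
  · simp only [Bool.false_eq_true, false_and, false_or]
    constructor
    · exact Or.inr
    · rintro (⟨hr, hxy⟩ | h0)
      · exfalso; apply hc
        rcases hxy with hx | hy
        · by_cases hy : gexact y
          · exact Or.inl ⟨hx, hy⟩
          · exact Or.inr ⟨hy, hr⟩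
        · exact Or.inr ⟨hy, hr⟩
      · exact h0

lemma gsub_antitone {x y y' : Gamma} (h1 : y ≤ y') (h2 : y' ≤ x) :
    gsub x y' ≤ gsub x y := by
  have hyx : y ≤ x := le_trans h1 h2
  have hg := gamma_mono h1
  rw [gle_iff, gsub_val h2, gsub_val hyx]
  rcases lt_or_eq_of_le hg with hlt | heq
  · exact Or.inl (by linarith)
  · refine Or.inr ⟨by rw [heq], fun he => ?_⟩
    rw [gsub_exact_iff h2] at he
    rw [gsub_exact_iff hyx]
    rw [← heq] at he
    rcases he with ⟨hr, hxy⟩ | h0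
    · refine Or.inl ⟨hr, ?_⟩
      rcases hxy with hx | hy'
      · exact Or.inl hx
      · refine Or.inr fun hy => hy' ?_
        rcases (gle_iff y y').mp h1 with hlt | ⟨_, himp⟩
        · exact absurd heq hlt.ne
        · exact himp hy
    · exact Or.inr h0

/-- for every `x ∈ Γ` and every nonempty family `S ⊆ [0°, x]`,
the map `x ∸ (−)` sends the supremum of `S` to the infimum of
`{x ∸ y | y ∈ S}`. -/
theorem stmt_12 (x : Gamma) (S : Set Gamma) (hne : S.Nonempty)
    (hS : ∀ y ∈ S, y ≤ x) (s : Gamma) (hs : IsLUB S s) :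
    IsGLB {z | ∃ y ∈ S, z = gsub x y} (gsub x s) := by
  have hsx : s ≤ x := hs.2 fun y hy => hS y hy
  -- the set of real values
  set A : Set ℝ := γmap '' S with hA
  have hAne : A.Nonempty := hne.image _
  have hAbdd : BddAbove A := ⟨γmap x, by rintro r ⟨y, hy, rfl⟩; exact gamma_mono (hS y hy)⟩
  set σ : ℝ := sSup A with hσ
  have hσ_ub : ∀ y ∈ S, γmap y ≤ σ := fun y hy => le_csSup hAbdd ⟨y, hy, rfl⟩
  have hσ_le_s : σ ≤ γmap s := csSup_le hAne (by rintro r ⟨y, hy, rfl⟩; exact gamma_mono (hs.1 hy))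
  -- lower bound part (common to both cases)
  have hlb : (gsub x s) ∈ lowerBounds {z | ∃ y ∈ S, z = gsub x y} := by
    rintro w ⟨y, hy, rfl⟩
    exact gsub_antitone (hs.1 hy) hsx
  refine ⟨hlb, ?_⟩
  intro z hz
  by_cases hca : ∃ y ∈ S, γmap y = σ ∧ gexact y
  · -- sup attained at an exact element: s ∈ S
    obtain ⟨y₀, hy₀, hgy₀, hey₀⟩ := hca
    have hub : y₀ ∈ upperBounds S := by
      intro y hy
      rw [gle_iff]
      rcases lt_or_eq_of_le (hσ_ub y hy) with hlt | heq
      · exact Or.inl (by rw [hgy₀]; exact hlt)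
      · exact Or.inr ⟨by rw [hgy₀, heq], fun _ => hey₀⟩
    have hseq : s = y₀ := le_antisymm (hs.2 hub) (hs.1 hy₀)
    exact hz ⟨s, hseq ▸ hy₀, rfl⟩
  · -- sup not attained exactly: s = σ⁻
    push_neg at hca
    have hσx : σ ≤ γmap x := csSup_le hAne (by rintro r ⟨y, hy, rfl⟩; exact gamma_mono (hS y hy))
    have hσpos : 0 < σ := by
      rcases lt_or_ge 0 σ with h | h
      · exact h
      · exfalso
        obtain ⟨y₀, hy₀⟩ := hne
        have hγ0 : γmap y₀ = 0 := le_antisymm (le_trans (hσ_ub y₀ hy₀) h) (gamma_nonneg y₀)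
        have hey₀ : gexact y₀ := by
          cases hb : (ofLex y₀.1).2
          · exact absurd ((gmem y₀).2.2.2 hb)
              (by rw [show (ofLex y₀.1).1 = γmap y₀ from rfl, hγ0]; exact lt_irrefl (0:ℝ))
          · exact hb
        exact hca y₀ hy₀ (le_antisymm (hσ_ub y₀ hy₀) (by rw [hγ0]; exact h)) hey₀
    -- the element σ⁻
    set t : Gamma := ⟨toLex (σ, false),
      mem_gammaCarrier hσpos.le (le_trans hσx (gamma_le_one x))
        (fun h => by simp at h) (fun _ => hσpos)⟩ with ht
    have hγt : γmap t = σ := rfl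
    have het : ¬ gexact t := by simp [gexact, ht]
    have htub : t ∈ upperBounds S := by
      intro y hy
      rw [gle_iff, hγt]
      rcases lt_or_eq_of_le (hσ_ub y hy) with hlt | heq
      · exact Or.inl hlt
      · exact Or.inr ⟨heq, fun he => absurd he (hca y hy heq)⟩
    have hst : s ≤ t := hs.2 htub
    have hγs : γmap s = σ := by
      rcases (gle_iff s t).mp hst with hlt | ⟨heq, _⟩
      · exact absurd (hγt ▸ hlt) (not_lt.mpr hσ_le_s)
      · exact heq.trans hγt
    have hes : ¬ gexact s := by
      rcases (gle_iff s t).mp hst with hlt | ⟨_, himp⟩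
      · exact absurd (hγt ▸ hlt) (not_lt.mpr hσ_le_s)
      · exact fun he => het (himp he)
    -- now show z ≤ gsub x s
    have hγz : γmap z ≤ γmap x - σ := by
      have h1 : ∀ y ∈ S, γmap y ≤ γmap x - γmap z := by
        intro y hy
        have := gamma_mono (hz ⟨y, hy, rfl⟩)
        rw [gsub_val (hS y hy)] at this
        linarith
      have := csSup_le hAne (by rintro r ⟨y, hy, rfl⟩; exact h1 y hy)
      linarith
    rw [gle_iff, gsub_val hsx, hγs]
    rcases lt_or_eq_of_le hγz with hlt | heq
    · exact Or.inl hlt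
    · refine Or.inr ⟨heq, fun hez => ?_⟩
      obtain ⟨q, hq⟩ := gexact_rat hez
      rw [gsub_exact_iff hsx]
      exact Or.inl ⟨⟨q, by rw [hq, heq, hγs]⟩, Or.inr hes⟩
end

section
/- Let D be a bounded distributive lattice and μ : D → Γ a Γ-valued measure (monotone, μ(0) = 0°, μ(1) = 1°, and for all a,b: μ(a) ∸̃ μ(a∧b) ≤ μ(a∨b) ∸ μ(b) and μ(a) ∸ μ(a∧b) ≥ μ(a∨b) ∸̃ μ(b)). Then γ ∘ μ : D → [0,1] is a classical finitely additive probability measure: monotone, sends 0 to 0 and 1 to 1, and satisfies (γ∘μ)(a) + (γ∘μ)(b) = (γ∘μ)(a∨b) + (γ∘μ)(a∧b) for all a, b ∈ D. -/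
open scoped Classical

theorem γmap_mono {x y : Gamma} (h : x ≤ y) : γmap x ≤ γmap y := by
  have h' : x.1 ≤ y.1 := h
  rcases Prod.Lex.le_iff.1 h' with h1 | h1
  · exact le_of_lt h1
  · exact le_of_eq h1.1

theorem γmap_mk' (r : ℝ) (e : Bool) : γmap (mk' r e) = max 0 (min 1 r) := by
  unfold mk'
  split <;> rfl

/-- if `μ : D → Γ` is a `Γ`-valued measure on a bounded
distributive lattice `D`, then `γ ∘ μ : D → [0,1]` is a classical finitely
additive probability measure: monotone, sending `0` to `0` and `1` to `1`, and
modular. -/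
theorem stmt_13 {D : Type*} [DistribLattice D] [BoundedOrder D]
    (μ : D → Gamma) (hμ : IsGMeasure μ) :
    Monotone (fun a => γmap (μ a)) ∧
    γmap (μ ⊥) = 0 ∧ γmap (μ ⊤) = 1 ∧
    (∀ a b : D, γmap (μ a) + γmap (μ b) = γmap (μ (a ⊔ b)) + γmap (μ (a ⊓ b))) ∧
    (∀ a : D, 0 ≤ γmap (μ a) ∧ γmap (μ a) ≤ 1) := by
  obtain ⟨hmono, hbot, htop, hmod⟩ := hμ
  have hbounds : ∀ a : D, 0 ≤ γmap (μ a) ∧ γmap (μ a) ≤ 1 := fun a =>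
    ⟨(gmem (μ a)).1, (gmem (μ a)).2.1⟩
  have key : ∀ {x y : Gamma}, y ≤ x →
      γmap (gsub x y) = γmap x - γmap y ∧ γmap (gsubt x y) = γmap x - γmap y := by
    intro x y hxy
    have h1 : 0 ≤ γmap x - γmap y := sub_nonneg.2 (γmap_mono hxy)
    have h2 : γmap x - γmap y ≤ 1 := by
      have hx : γmap x ≤ 1 := (gmem x).2.1
      have hy : 0 ≤ γmap y := (gmem y).1
      linarith
    have hclamp : max 0 (min 1 (γmap x - γmap y)) = γmap x - γmap y := by
      rw [min_eq_right h2, max_eq_right h1]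
    exact ⟨by rw [gsub, γmap_mk', hclamp], by rw [gsubt, γmap_mk', hclamp]⟩
  refine ⟨fun a b hab => γmap_mono (hmono hab), ?_, ?_, ?_, hbounds⟩
  · rw [hbot, gzero, γmap_mk']; norm_num
  · rw [htop, gone, γmap_mk']; norm_num
  · intro a b
    obtain ⟨hle1, hle2⟩ := hmod a b
    have m1 : μ (a ⊓ b) ≤ μ a := hmono inf_le_left
    have m2 : μ b ≤ μ (a ⊔ b) := hmono le_sup_right
    have i1 := γmap_mono hle1
    have i2 := γmap_mono hle2
    rw [(key m1).2, (key m2).1] at i1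
    rw [(key m2).2, (key m1).1] at i2
    linarith
end
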